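/- If e ∈ Win_a([p,q]^∧_a) in the weak spectroscopy energy game G△, then there exists a conjunct ψ ∈ Strat([p,q]^∧_a, e) with expr^∧(ψ) ≤ e. -/

import Mathlib

open Classical

noncomputable section

namespace Spectroscopy

/-! ### Energies and declining energy games -/

/-- Energies: 8-dimensional vectors over `ℕ ∪ {∞}`, ordered componentwise. -/
abbrev Energy : Type := Fin 8 → ℕ∞

/-- The `i`-th unit vector. -/
def unitE (i : Fin 8) : Energy := fun k => if k = i then 1 else 0

/-- The vector with value `v` at position `i` and `0` elsewhere. -/
def onlyAt (i : Fin 8) (v : ℕ∞) : Energy := fun k => if k = i then v else 0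

/-- Components of energy updates: `-1`, `0`, or minimum selection `min_D`.
For the component at position `k`, `minWith D` selects the minimum over the
positions `{k} ∪ D`, so the requirement `k ∈ D` of the paper holds by
construction. -/
inductive UpdComp : Type
  | decr : UpdComp
  | zero : UpdComp
  | minWith (D : Finset (Fin 8)) : UpdComp
deriving DecidableEq

/-- Energy updates. -/
abbrev Update : Type := Fin 8 → UpdComp

/-- Partial application of an update to an energy (`none` when a component
would become negative). -/
def upd (e : Energy) (u : Update) : Option Energy :=
  if ∀ k, u k = UpdComp.decr → e k ≠ 0 then
    some (fun k =>
      match u k with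
      | UpdComp.decr => e k - 1
      | UpdComp.zero => e k
      | UpdComp.minWith D => (insert k D).inf e)
  else none

/-- A declining energy game: positions, a defender predicate (attacker
positions are the non-defender ones), and moves labeled with updates. -/
structure EGame (Pos : Type) where
  defender : Pos → Prop
  move : Pos → Update → Pos → Prop

/-- Attacker winning budgets `Win_a`: at an attacker position some move must
lead to an attacker-won position under the updated energy; at a defender
position every move must (be defined and) lead to an attacker-won position. -/
inductive EGame.Win {Pos : Type} (G : EGame Pos) : Pos → Energy → Prop
  | attack {g : Pos} {u : Update} {g' : Pos} {e e' : Energy} :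
      ¬ G.defender g → G.move g u g' → upd e u = some e' → G.Win g' e' →
      G.Win g e
  | defend {g : Pos} {e : Energy} :
      G.defender g →
      (∀ u g', G.move g u g' → upd e u ≠ none) →
      (∀ u g' e', G.move g u g' → upd e u = some e' → G.Win g' e') →
      G.Win g e

/-! ### Labeled transition systems with silent steps -/

section LTS

variable {Proc Act : Type}

/-- Weak internal steps `↠`: reflexive-transitive closure of `τ`-steps. -/
def Star (Tr : Proc → Act → Proc → Prop) (τ : Act) : Proc → Proc → Prop :=
  Relation.ReflTransGen fun p p' => Tr p τ p'

/-- A process is stable if it has no `τ`-step. -/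
def Stable (Tr : Proc → Act → Proc → Prop) (τ : Act) (p : Proc) : Prop :=
  ∀ p', ¬ Tr p τ p'

/-- Optional step `p →(α) p'`: a real `α`-step, or `α = τ` and `p = p'`. -/
def OptStep (Tr : Proc → Act → Proc → Prop) (τ : Act) (p : Proc) (α : Act) (p' : Proc) : Prop :=
  Tr p α p' ∨ (α = τ ∧ p = p')

/-- Lift of `→a` to sets. -/
def SetStep (Tr : Proc → Act → Proc → Prop) (Q : Set Proc) (a : Act) (Q' : Set Proc) : Prop :=
  Q' = {q' | ∃ q ∈ Q, Tr q a q'}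

/-- Lift of `↠` to sets. -/
def SetStar (Tr : Proc → Act → Proc → Prop) (τ : Act) (Q Q' : Set Proc) : Prop :=
  Q' = {q' | ∃ q ∈ Q, Star Tr τ q q'}

/-- Lift of `→(α)` to sets. -/
def SetOpt (Tr : Proc → Act → Proc → Prop) (τ : Act) (Q : Set Proc) (α : Act)
    (Q' : Set Proc) : Prop :=
  Q' = {q' | ∃ q ∈ Q, OptStep Tr τ q α q'}

end LTS

/-! ### The logic HML_srbb -/

mutual
/-- Formulas `φ` of HML_srbb: `⟨ε⟩χ` or immediate conjunctions `⋀Ψ`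
(conjunctions are indexed by an arbitrary type). `⊤` is the empty conjunction. -/
inductive Formula (Act : Type) (τ : Act) : Type 1
  | delayed : DFormula Act τ → Formula Act τ
  | conj : (I : Type) → (I → Conjunct Act τ) → Formula Act τ

/-- Delayed formulas `χ`: observations `⟨a⟩φ` (with `a ≠ τ`), standard
conjunctions `⋀Ψ`, stable conjunctions `⋀({¬⟨τ⟩⊤} ∪ Ψ)`, and branching
conjunctions `⋀({(α)φ} ∪ Ψ)`. -/
inductive DFormula (Act : Type) (τ : Act) : Type 1
  | obs : (a : Act) → a ≠ τ → Formula Act τ → DFormula Act τ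
  | conj : (I : Type) → (I → Conjunct Act τ) → DFormula Act τ
  | stableConj : (I : Type) → (I → Conjunct Act τ) → DFormula Act τ
  | branchConj : (α : Act) → Formula Act τ → (I : Type) → (I → Conjunct Act τ) → DFormula Act τ

/-- Conjuncts `ψ`: positive `⟨ε⟩χ` or negative `¬⟨ε⟩χ`. -/
inductive Conjunct (Act : Type) (τ : Act) : Type 1
  | pos : DFormula Act τ → Conjunct Act τ
  | neg : DFormula Act τ → Conjunct Act τ
end

section Semantics

variable {Proc Act : Type}

mutual
/-- Semantics `⟦φ⟧`. -/
def Sat (Tr : Proc → Act → Proc → Prop) (τ : Act) (p : Proc) : Formula Act τ → Prop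
  | .delayed χ => ∃ p', Star Tr τ p p' ∧ SatD Tr τ p' χ
  | .conj _ ps => ∀ i, SatC Tr τ p (ps i)

/-- Semantics `⟦χ⟧^ε` of delayed formulas. -/
def SatD (Tr : Proc → Act → Proc → Prop) (τ : Act) (p : Proc) : DFormula Act τ → Prop
  | .obs a _ φ => ∃ p', Tr p a p' ∧ Sat Tr τ p' φ
  | .conj _ ps => ∀ i, SatC Tr τ p (ps i)
  | .stableConj _ ps => Stable Tr τ p ∧ ∀ i, SatC Tr τ p (ps i)
  | .branchConj α φ _ ps =>
      (∃ p', OptStep Tr τ p α p' ∧ Sat Tr τ p' φ) ∧ ∀ i, SatC Tr τ p (ps i)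

/-- Semantics `⟦ψ⟧^∧` of conjuncts. -/
def SatC (Tr : Proc → Act → Proc → Prop) (τ : Act) (p : Proc) : Conjunct Act τ → Prop
  | .pos χ => ∃ p', Star Tr τ p p' ∧ SatD Tr τ p' χ
  | .neg χ => ¬ ∃ p', Star Tr τ p p' ∧ SatD Tr τ p' χ
end

/-- `φ` distinguishes `p` from the set `Q`. -/
def Distinguishes (Tr : Proc → Act → Proc → Prop) (τ : Act) (φ : Formula Act τ)
    (p : Proc) (Q : Set Proc) : Prop :=
  Sat Tr τ p φ ∧ ∀ q ∈ Q, ¬ Sat Tr τ q φ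

/-- The delayed formula `χ` distinguishes `p` from the set `Q` w.r.t. `⟦·⟧^ε`. -/
def DistinguishesD (Tr : Proc → Act → Proc → Prop) (τ : Act) (χ : DFormula Act τ)
    (p : Proc) (Q : Set Proc) : Prop :=
  SatD Tr τ p χ ∧ ∀ q ∈ Q, ¬ SatD Tr τ q χ

/-- The conjunct `ψ` distinguishes `p` from `q` w.r.t. `⟦·⟧^∧`. -/
def DistinguishesC (Tr : Proc → Act → Proc → Prop) (τ : Act) (ψ : Conjunct Act τ)
    (p q : Proc) : Prop :=
  SatC Tr τ p ψ ∧ ¬ SatC Tr τ q ψ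

/-- Stability-respecting branching bisimulations: symmetric relations with the
branching-bisimulation transfer property and the stability-respecting
property. -/
def IsSRBBisim (Tr : Proc → Act → Proc → Prop) (τ : Act) (R : Proc → Proc → Prop) : Prop :=
  Symmetric R ∧
  (∀ p q, R p q → ∀ α p', Tr p α p' →
    (α = τ ∧ R p' q) ∨
      ∃ q' q'', Star Tr τ q q' ∧ Tr q' α q'' ∧ R p q' ∧ R p' q'') ∧
  (∀ p q, R p q → Stable Tr τ p →
    ∃ q', Star Tr τ q q' ∧ Stable Tr τ q' ∧ R p q')

end Semantics

/-! ### Expressiveness prices -/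

section Expr

variable {Act : Type} {τ : Act}

mutual
/-- Expressiveness price `expr` of formulas. -/
def exprF : Formula Act τ → Energy
  | .delayed χ => exprE χ
  | .conj I ps => ⨆ _ : Nonempty I, ((unitE 4 + unitE 2) + ⨆ i, exprC (ps i))

/-- Expressiveness price `expr^ε` of delayed formulas. -/
def exprE : DFormula Act τ → Energy
  | .obs _ _ φ => unitE 0 + exprF φ
  | .conj I ps => ⨆ _ : Nonempty I, (unitE 2 + ⨆ i, exprC (ps i))
  | .stableConj _ ps => unitE 3 + ⨆ i, exprC (ps i)
  | .branchConj _ φ _ ps =>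
      (unitE 1 + unitE 2) +
        (((unitE 0 + exprF φ) ⊔ onlyAt 5 (1 + exprF φ 0)) ⊔ ⨆ i, exprC (ps i))

/-- Expressiveness price `expr^∧` of conjuncts. -/
def exprC : Conjunct Act τ → Energy
  | .pos χ => exprE χ ⊔ onlyAt 5 (exprE χ 0)
  | .neg χ => (unitE 7 + exprE χ) ⊔ onlyAt 6 (exprE χ 0)
end

end Expr

/-! ### The weak spectroscopy energy game -/

/-- Positions of the weak spectroscopy game. -/
inductive GPos (Proc Act : Type) : Type
  | att (p : Proc) (Q : Set Proc)                                 -- `[p,Q]_a`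
  | attD (p : Proc) (Q : Set Proc)                                -- `[p,Q]^ε_a`
  | attC (p q : Proc)                                             -- `[p,q]^∧_a`
  | attB (p : Proc) (Q : Set Proc)                                -- `[p,Q]^η_a`
  | defC (p : Proc) (Q : Set Proc)                                -- `(p,Q)_d`
  | defS (p : Proc) (Q : Set Proc)                                -- `(p,Q)^s_d`
  | defB (p : Proc) (α : Act) (p' : Proc) (Q Qa : Set Proc)       -- `(p,α,p',Q,Qa)^η_d`

/-- The zero update. -/
def zeroU : Update := fun _ => UpdComp.zero

/-- The update `-ê_i`. -/
def decU (i : Fin 8) : Update := fun k => if k = i then UpdComp.decr else UpdComp.zero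

/-- The update `(min_{1,6},0,0,0,0,0,0,0)`. -/
def minU16 : Update := fun k => if k = 0 then UpdComp.minWith {5} else UpdComp.zero

/-- The update `(min_{1,7},0,0,0,0,0,0,-1)`. -/
def minU17dec8 : Update := fun k =>
  if k = 0 then UpdComp.minWith {6} else if k = 7 then UpdComp.decr else UpdComp.zero

/-- The update `(0,-1,-1,0,0,0,0,0)`. -/
def dec23 : Update := fun k => if k = 1 ∨ k = 2 then UpdComp.decr else UpdComp.zero

/-- The update `(min_{1,6},-1,-1,0,0,0,0,0)`. -/
def minU16dec23 : Update := fun k =>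
  if k = 0 then UpdComp.minWith {5}
  else if k = 1 ∨ k = 2 then UpdComp.decr else UpdComp.zero

section Game

variable {Proc Act : Type}

/-- Moves of the weak spectroscopy game. -/
inductive GMove (Tr : Proc → Act → Proc → Prop) (τ : Act) :
    GPos Proc Act → Update → GPos Proc Act → Prop
  | delay {p : Proc} {Q Q' : Set Proc} :
      SetStar Tr τ Q Q' →
      GMove Tr τ (.att p Q) zeroU (.attD p Q')
  | procrastination {p p' : Proc} {Q : Set Proc} :
      Tr p τ p' → p ≠ p' →
      GMove Tr τ (.attD p Q) zeroU (.attD p' Q)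
  | observation {p p' : Proc} {a : Act} {Q Q' : Set Proc} :
      Tr p a p' → a ≠ τ → SetStep Tr Q a Q' →
      GMove Tr τ (.attD p Q) (decU 0) (.att p' Q')
  | finishing {p : Proc} :
      GMove Tr τ (.att p ∅) zeroU (.defC p ∅)
  | immediateConj {p : Proc} {Q : Set Proc} :
      Q ≠ ∅ →
      GMove Tr τ (.att p Q) (decU 4) (.defC p Q)
  | lateConj {p : Proc} {Q : Set Proc} :
      GMove Tr τ (.attD p Q) zeroU (.defC p Q)
  | conjAnswer {p q : Proc} {Q : Set Proc} :
      q ∈ Q →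
      GMove Tr τ (.defC p Q) (decU 2) (.attC p q)
  | posConjunct {p q : Proc} {Q : Set Proc} :
      SetStar Tr τ {q} Q →
      GMove Tr τ (.attC p q) minU16 (.attD p Q)
  | negConjunct {p q : Proc} {Q : Set Proc} :
      SetStar Tr τ {p} Q → p ≠ q →
      GMove Tr τ (.attC p q) minU17dec8 (.attD q Q)
  | stableConj {p : Proc} {Q : Set Proc} :
      Stable Tr τ p →
      GMove Tr τ (.attD p Q) zeroU (.defS p {q ∈ Q | Stable Tr τ q})
  | conjStableAnswer {p q : Proc} {Q : Set Proc} :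
      q ∈ Q →
      GMove Tr τ (.defS p Q) (decU 3) (.attC p q)
  | stableFinishing {p : Proc} :
      GMove Tr τ (.defS p ∅) (decU 3) (.defC p ∅)
  | branchConj {p p' : Proc} {α : Act} {Q Qa : Set Proc} :
      OptStep Tr τ p α p' → Qa ⊆ Q →
      GMove Tr τ (.attD p Q) zeroU (.defB p α p' (Q \ Qa) Qa)
  | branchAnswer {p p' q : Proc} {α : Act} {Q Qa : Set Proc} :
      q ∈ Q →
      GMove Tr τ (.defB p α p' Q Qa) dec23 (.attC p q)
  | branchObservation {p p' : Proc} {α : Act} {Q Qa Q' : Set Proc} :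
      SetOpt Tr τ Qa α Q' →
      GMove Tr τ (.defB p α p' Q Qa) minU16dec23 (.attB p' Q')
  | branchAccounting {p : Proc} {Q : Set Proc} :
      GMove Tr τ (.attB p Q) (decU 0) (.att p Q)

/-- Defender positions of the weak spectroscopy game. -/
def isDefender : GPos Proc Act → Prop
  | .defC _ _ => True
  | .defS _ _ => True
  | .defB _ _ _ _ _ => True
  | _ => False

/-- The weak spectroscopy energy game `G△`. -/
def specGame (Tr : Proc → Act → Proc → Prop) (τ : Act) : EGame (GPos Proc Act) where
  defender := isDefender
  move := GMove Tr τ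

end Game

/-! ### Strategy formulas -/

section Strat

variable {Proc Act : Type}

mutual
/-- Attacker strategy formulas (formula sort). -/
inductive StratF (Tr : Proc → Act → Proc → Prop) (τ : Act) :
    GPos Proc Act → Energy → Formula Act τ → Prop
  | delay {p : Proc} {Q Q' : Set Proc} {u : Update} {e e' : Energy} {χ : DFormula Act τ} :
      GMove Tr τ (.att p Q) u (.attD p Q') →
      upd e u = some e' →
      (specGame Tr τ).Win (.attD p Q') e' →
      StratD Tr τ (.attD p Q') e' χ →
      StratF Tr τ (.att p Q) e (.delayed χ)
  | immediateConj {p : Proc} {Q : Set Proc} {u : Update} {e e' : Energy}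
      {I : Type} {ps : I → Conjunct Act τ} :
      GMove Tr τ (.att p Q) u (.defC p Q) →
      upd e u = some e' →
      (specGame Tr τ).Win (.defC p Q) e' →
      StratD Tr τ (.defC p Q) e' (.conj I ps) →
      StratF Tr τ (.att p Q) e (.conj I ps)

/-- Attacker strategy formulas (delayed-formula sort). -/
inductive StratD (Tr : Proc → Act → Proc → Prop) (τ : Act) :
    GPos Proc Act → Energy → DFormula Act τ → Prop
  | procrastination {p p' : Proc} {Q : Set Proc} {u : Update} {e e' : Energy}
      {χ : DFormula Act τ} :
      GMove Tr τ (.attD p Q) u (.attD p' Q) →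
      upd e u = some e' →
      (specGame Tr τ).Win (.attD p' Q) e' →
      StratD Tr τ (.attD p' Q) e' χ →
      StratD Tr τ (.attD p Q) e χ
  | observation {p p' : Proc} {a : Act} {Q Q' : Set Proc} {u : Update} {e e' : Energy}
      {φ : Formula Act τ} (ha : a ≠ τ) :
      GMove Tr τ (.attD p Q) u (.att p' Q') →
      Tr p a p' → SetStep Tr Q a Q' →
      upd e u = some e' →
      (specGame Tr τ).Win (.att p' Q') e' →
      StratF Tr τ (.att p' Q') e' φ →
      StratD Tr τ (.attD p Q) e (.obs a ha φ)
  | lateConj {p : Proc} {Q : Set Proc} {u : Update} {e e' : Energy} {χ : DFormula Act τ} :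
      GMove Tr τ (.attD p Q) u (.defC p Q) →
      upd e u = some e' →
      (specGame Tr τ).Win (.defC p Q) e' →
      StratD Tr τ (.defC p Q) e' χ →
      StratD Tr τ (.attD p Q) e χ
  | stable {p : Proc} {Q Q' : Set Proc} {u : Update} {e e' : Energy} {χ : DFormula Act τ} :
      GMove Tr τ (.attD p Q) u (.defS p Q') →
      upd e u = some e' →
      (specGame Tr τ).Win (.defS p Q') e' →
      StratD Tr τ (.defS p Q') e' χ →
      StratD Tr τ (.attD p Q) e χ
  | branch {p p' : Proc} {α : Act} {Q Q' Qa : Set Proc} {u : Update} {e e' : Energy}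
      {χ : DFormula Act τ} :
      GMove Tr τ (.attD p Q) u (.defB p α p' Q' Qa) →
      upd e u = some e' →
      (specGame Tr τ).Win (.defB p α p' Q' Qa) e' →
      StratD Tr τ (.defB p α p' Q' Qa) e' χ →
      StratD Tr τ (.attD p Q) e χ
  | conj {p : Proc} {Q : Set Proc} {e : Energy}
      (us : {q // q ∈ Q} → Update) (es : {q // q ∈ Q} → Energy)
      (ψs : {q // q ∈ Q} → Conjunct Act τ) :
      (∀ qq : {q // q ∈ Q}, GMove Tr τ (.defC p Q) (us qq) (.attC p qq.1)) →
      (∀ qq : {q // q ∈ Q}, upd e (us qq) = some (es qq)) →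
      (∀ qq : {q // q ∈ Q}, (specGame Tr τ).Win (.attC p qq.1) (es qq)) →
      (∀ qq : {q // q ∈ Q}, StratC Tr τ (.attC p qq.1) (es qq) (ψs qq)) →
      StratD Tr τ (.defC p Q) e (.conj {q // q ∈ Q} ψs)
  | stableConj {p : Proc} {Q : Set Proc} {e : Energy}
      (hne : Q.Nonempty)
      (us : {q // q ∈ Q} → Update) (es : {q // q ∈ Q} → Energy)
      (ψs : {q // q ∈ Q} → Conjunct Act τ) :
      (∀ qq : {q // q ∈ Q}, GMove Tr τ (.defS p Q) (us qq) (.attC p qq.1)) →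
      (∀ qq : {q // q ∈ Q}, upd e (us qq) = some (es qq)) →
      (∀ qq : {q // q ∈ Q}, (specGame Tr τ).Win (.attC p qq.1) (es qq)) →
      (∀ qq : {q // q ∈ Q}, StratC Tr τ (.attC p qq.1) (es qq) (ψs qq)) →
      StratD Tr τ (.defS p Q) e (.stableConj {q // q ∈ Q} ψs)
  | stableFinish {p : Proc} {u : Update} {e e' : Energy} :
      GMove Tr τ (.defS p ∅) u (.defC p ∅) →
      upd e u = some e' →
      (specGame Tr τ).Win (.defC p (∅ : Set Proc)) e' →
      StratD Tr τ (.defS p ∅) e (.stableConj Empty fun x => x.elim)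
  | branchConj {p p' : Proc} {α : Act} {Q Qa Q' : Set Proc} {ua ua' : Update}
      {e e1 ea : Energy} {φa : Formula Act τ}
      (us : {q // q ∈ Q} → Update) (es : {q // q ∈ Q} → Energy)
      (ψs : {q // q ∈ Q} → Conjunct Act τ) :
      GMove Tr τ (.defB p α p' Q Qa) ua (.attB p' Q') →
      GMove Tr τ (.attB p' Q') ua' (.att p' Q') →
      upd e ua = some e1 →
      upd e1 ua' = some ea →
      (specGame Tr τ).Win (.att p' Q') ea →
      StratF Tr τ (.att p' Q') ea φa →
      (∀ qq : {q // q ∈ Q}, GMove Tr τ (.defB p α p' Q Qa) (us qq) (.attC p qq.1)) →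
      (∀ qq : {q // q ∈ Q}, upd e (us qq) = some (es qq)) →
      (∀ qq : {q // q ∈ Q}, (specGame Tr τ).Win (.attC p qq.1) (es qq)) →
      (∀ qq : {q // q ∈ Q}, StratC Tr τ (.attC p qq.1) (es qq) (ψs qq)) →
      StratD Tr τ (.defB p α p' Q Qa) e (.branchConj α φa {q // q ∈ Q} ψs)

/-- Attacker strategy formulas (conjunct sort). -/
inductive StratC (Tr : Proc → Act → Proc → Prop) (τ : Act) :
    GPos Proc Act → Energy → Conjunct Act τ → Prop
  | pos {p q : Proc} {Q' : Set Proc} {u : Update} {e e' : Energy} {χ : DFormula Act τ} :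
      GMove Tr τ (.attC p q) u (.attD p Q') →
      upd e u = some e' →
      (specGame Tr τ).Win (.attD p Q') e' →
      StratD Tr τ (.attD p Q') e' χ →
      StratC Tr τ (.attC p q) e (.pos χ)
  | neg {p q : Proc} {P' : Set Proc} {u : Update} {e e' : Energy} {χ : DFormula Act τ} :
      GMove Tr τ (.attC p q) u (.attD q P') →
      upd e u = some e' →
      (specGame Tr τ).Win (.attD q P') e' →
      StratD Tr τ (.attD q P') e' χ →
      StratC Tr τ (.attC p q) e (.neg χ)
end

end Strat


section ProofAux

lemma enat_one_add_le {a x : ℕ∞} (h : a ≠ 0) (hx : x ≤ a - 1) : 1 + x ≤ a := by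
  rw [add_comm]
  calc x + 1 ≤ (a - 1) + 1 := add_le_add_left hx 1
    _ = a := tsub_add_cancel_of_le (ENat.one_le_iff_ne_zero.mpr h)

lemma upd_eq_some_of {e : Energy} {u : Update} (h : ∀ k, u k = UpdComp.decr → e k ≠ 0) :
    upd e u = some (fun k => match u k with
      | UpdComp.decr => e k - 1
      | UpdComp.zero => e k
      | UpdComp.minWith D => (insert k D).inf e) := by
  unfold upd
  rw [if_pos h]

lemma upd_spec {e : Energy} {u : Update} {e' : Energy} (h : upd e u = some e') :
    (∀ k, u k = UpdComp.decr → e k ≠ 0) ∧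
    ∀ k, e' k = match u k with
      | UpdComp.decr => e k - 1
      | UpdComp.zero => e k
      | UpdComp.minWith D => (insert k D).inf e := by
  unfold upd at h
  split at h
  case isTrue hc =>
    refine ⟨hc, fun k => ?_⟩
    have h2 := (Option.some.injEq _ _).mp h
    exact (congrFun h2 k).symm
  case isFalse => simp at h

lemma upd_zeroU (e : Energy) : upd e zeroU = some e :=
  upd_eq_some_of (fun k h => by simp [zeroU] at h)

lemma decU_spec {e e' : Energy} {i : Fin 8} (h : upd e (decU i) = some e') :
    e i ≠ 0 ∧ ∀ k, e' k = if k = i then e k - 1 else e k := by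
  obtain ⟨h1, h2⟩ := upd_spec h
  refine ⟨h1 i (by simp [decU]), fun k => ?_⟩
  rw [h2 k]
  by_cases hk : k = i <;> simp [decU, hk]

end ProofAux
section ProofAux2

lemma minU16_spec {e e' : Energy} (h : upd e minU16 = some e') :
    e' 0 = e 0 ⊓ e 5 ∧ ∀ k, k ≠ 0 → e' k = e k := by
  obtain ⟨-, h2⟩ := upd_spec h
  constructor
  · rw [h2 0]; simp [minU16]
  · intro k hk; rw [h2 k]; simp [minU16, hk]

lemma minU17dec8_spec {e e' : Energy} (h : upd e minU17dec8 = some e') :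
    e 7 ≠ 0 ∧ e' 0 = e 0 ⊓ e 6 ∧ e' 7 = e 7 - 1 ∧
      ∀ k, k ≠ 0 → k ≠ 7 → e' k = e k := by
  obtain ⟨h1, h2⟩ := upd_spec h
  refine ⟨h1 7 (by simp [minU17dec8]), ?_, ?_, ?_⟩
  · rw [h2 0]; simp [minU17dec8]
  · rw [h2 7]; simp [minU17dec8]
  · intro k hk0 hk7; rw [h2 k]; simp [minU17dec8, hk0, hk7]

lemma dec23_spec {e e' : Energy} (h : upd e dec23 = some e') :
    e 1 ≠ 0 ∧ e 2 ≠ 0 ∧ ∀ k, e' k = if k = 1 ∨ k = 2 then e k - 1 else e k := by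
  obtain ⟨h1, h2⟩ := upd_spec h
  refine ⟨h1 1 (by simp [dec23]), h1 2 (by simp [dec23]), fun k => ?_⟩
  rw [h2 k]
  by_cases hk : k = 1 ∨ k = 2 <;> simp [dec23, hk]

lemma minU16dec23_spec {e e' : Energy} (h : upd e minU16dec23 = some e') :
    e 1 ≠ 0 ∧ e 2 ≠ 0 ∧ e' 0 = e 0 ⊓ e 5 ∧ e' 1 = e 1 - 1 ∧ e' 2 = e 2 - 1 ∧
      ∀ k, k ≠ 0 → k ≠ 1 → k ≠ 2 → e' k = e k := by
  obtain ⟨h1, h2⟩ := upd_spec h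
  refine ⟨h1 1 (by simp [minU16dec23]), h1 2 (by simp [minU16dec23]), ?_, ?_, ?_, ?_⟩
  · rw [h2 0]; simp [minU16dec23]
  · rw [h2 1]; simp [minU16dec23]
  · rw [h2 2]; simp [minU16dec23]
  · intro k hk0 hk1 hk2; rw [h2 k]; simp [minU16dec23, hk0, hk1, hk2]

lemma upd_dec23_of (e : Energy) (h1 : e 1 ≠ 0) (h2 : e 2 ≠ 0) :
    upd e dec23 = some (fun k => if k = 1 ∨ k = 2 then e k - 1 else e k) := by
  rw [upd_eq_some_of (fun k hk => by
    by_contra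
    revert hk
    simp only [dec23]
    split
    · rename_i hor
      rcases hor with rfl | rfl <;> intro _ <;> simp_all
    · simp)]
  congr 1
  funext k
  by_cases hk : k = 1 ∨ k = 2 <;> simp [dec23, hk]

end ProofAux2
section PriceAux

variable {Act : Type} {τ : Act}

lemma unit_add_le {i : Fin 8} {e e' x : Energy} (h0 : e i ≠ 0)
    (hspec : ∀ k, e' k = if k = i then e k - 1 else e k) (hx : x ≤ e') :
    unitE i + x ≤ e := by
  intro k
  have hxk : x k ≤ e' k := hx k
  rw [hspec k] at hxk
  simp only [Pi.add_apply, unitE]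
  by_cases hk : k = i
  · subst hk
    rw [if_pos rfl] at hxk ⊢
    exact enat_one_add_le h0 hxk
  · rw [if_neg hk] at hxk ⊢
    simpa using hxk

lemma iSup_energy_le {I : Type} {f : I → Energy} {e : Energy}
    (h : ∀ i, f i ≤ e) : (⨆ i, f i) ≤ e := iSup_le h

lemma iSup_energy_apply_le {I : Type} {f : I → Energy} {e : Energy} (k : Fin 8)
    (h : ∀ i, f i k ≤ e k) : (⨆ i, f i) k ≤ e k := by
  rw [iSup_apply]; exact iSup_le h

/-- Price of a positive conjunct obtained through `minU16`. -/
lemma pos_price {χ : DFormula Act τ} {e e' : Energy}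
    (h0 : e' 0 = e 0 ⊓ e 5) (hk : ∀ k, k ≠ 0 → e' k = e k)
    (hχ : exprE χ ≤ e') : exprC (Conjunct.pos χ) ≤ e := by
  intro k
  simp only [exprC, Pi.sup_apply, onlyAt]
  apply sup_le
  · by_cases h : k = 0
    · subst h
      exact le_trans (hχ 0) (h0 ▸ inf_le_left)
    · exact le_trans (hχ k) (le_of_eq (hk k h))
  · by_cases h : k = (5 : Fin 8)
    · subst h
      rw [if_pos rfl]
      exact le_trans (hχ 0) (h0 ▸ inf_le_right)
    · rw [if_neg h]; exact zero_le

/-- Price of a negative conjunct obtained through `minU17dec8`. -/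
lemma neg_price {χ : DFormula Act τ} {e e' : Energy}
    (h7 : e 7 ≠ 0) (h0 : e' 0 = e 0 ⊓ e 6) (h7' : e' 7 = e 7 - 1)
    (hk : ∀ k, k ≠ 0 → k ≠ 7 → e' k = e k)
    (hχ : exprE χ ≤ e') : exprC (Conjunct.neg χ) ≤ e := by
  intro k
  simp only [exprC, Pi.sup_apply, Pi.add_apply, onlyAt, unitE]
  apply sup_le
  · by_cases h : k = (7 : Fin 8)
    · subst h
      rw [if_pos rfl]
      exact enat_one_add_le h7 (h7' ▸ hχ 7)
    · rw [if_neg h]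
      by_cases h0k : k = 0
      · subst h0k
        simpa using le_trans (hχ 0) (h0 ▸ inf_le_left)
      · simpa using le_trans (hχ k) (le_of_eq (hk k h0k h))
  · by_cases h : k = (6 : Fin 8)
    · subst h
      rw [if_pos rfl]
      exact le_trans (hχ 0) (h0 ▸ inf_le_right)
    · rw [if_neg h]; exact zero_le

end PriceAux
section PriceAux2

variable {Act : Type} {τ : Act}

/-- Empty conjunction (delayed sort) costs nothing. -/
lemma conj_price_empty {I : Type} (hI : ¬ Nonempty I) {ps : I → Conjunct Act τ} {e : Energy} :
    exprE (DFormula.conj I ps) ≤ e := by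
  simp only [exprE]
  exact iSup_le fun h => absurd h hI

/-- Empty conjunction (formula sort) costs nothing. -/
lemma conjF_price_empty {I : Type} (hI : ¬ Nonempty I) {ps : I → Conjunct Act τ} {e : Energy} :
    exprF (Formula.conj I ps) ≤ e := by
  simp only [exprF]
  exact iSup_le fun h => absurd h hI

/-- Price of a standard conjunction obtained through `decU 2`. -/
lemma conj_price {I : Type} {ps : I → Conjunct Act τ} {e e' : Energy}
    (h0 : e 2 ≠ 0) (hspec : ∀ k, e' k = if k = 2 then e k - 1 else e k)
    (hle : ∀ i, exprC (ps i) ≤ e') : exprE (DFormula.conj I ps) ≤ e := by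
  simp only [exprE]
  exact iSup_le fun _ => unit_add_le h0 hspec (iSup_le hle)

/-- Immediate conjunction price: `exprF` of a conjunction through `decU 4`. -/
lemma conjF_price {I : Type} {ps : I → Conjunct Act τ} {e e' : Energy}
    (h0 : e 4 ≠ 0) (hspec : ∀ k, e' k = if k = 4 then e k - 1 else e k)
    (hle : exprE (DFormula.conj I ps) ≤ e') :
    exprF (Formula.conj I ps) ≤ e := by
  by_cases hI : Nonempty I
  · simp only [exprF]
    apply iSup_le
    intro h
    have h1 : unitE 2 + ⨆ i, exprC (ps i) ≤ e' := by
      refine le_trans ?_ hle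
      simp only [exprE]
      exact le_iSup (fun _ : Nonempty I => unitE 2 + ⨆ i, exprC (ps i)) hI
    have : (unitE 4 + unitE 2) + ⨆ i, exprC (ps i)
        = unitE 4 + (unitE 2 + ⨆ i, exprC (ps i)) := add_assoc _ _ _
    rw [this]
    exact unit_add_le h0 hspec h1
  · exact conjF_price_empty hI

/-- Price of a stable conjunction over nonempty index through `decU 3`. -/
lemma stableConj_price {I : Type} {ps : I → Conjunct Act τ} {e e' : Energy}
    (h0 : e 3 ≠ 0) (hspec : ∀ k, e' k = if k = 3 then e k - 1 else e k)
    (hle : ∀ i, exprC (ps i) ≤ e') : exprE (DFormula.stableConj I ps) ≤ e := by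
  simp only [exprE]
  exact unit_add_le h0 hspec (iSup_le hle)

/-- Price of the empty stable conjunction. -/
lemma stableConj_empty_price {e : Energy} (h0 : e 3 ≠ 0) :
    exprE (DFormula.stableConj Empty (fun x : Empty => x.elim) : DFormula Act τ) ≤ e := by
  simp only [exprE]
  intro k
  simp only [Pi.add_apply, unitE]
  rw [iSup_apply]
  have hbot : (⨆ i : Empty, exprC ((fun x : Empty => (x.elim : Conjunct Act τ)) i) k) = 0 := by
    simp [iSup_of_empty]
  rw [hbot]
  by_cases hk : k = (3 : Fin 8)
  · subst hk
    rw [if_pos rfl]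
    simpa using ENat.one_le_iff_ne_zero.mpr h0
  · rw [if_neg hk]; simp

end PriceAux2
section PriceAux3

variable {Act : Type} {τ : Act}

lemma branch_price {α : Act} {φa : Formula Act τ} {I : Type} {ps : I → Conjunct Act τ}
    {e f ea e2 : Energy}
    (h1 : e 1 ≠ 0) (h2 : e 2 ≠ 0)
    (hf0 : f 0 = e 0 ⊓ e 5) (hf1 : f 1 = e 1 - 1) (hf2 : f 2 = e 2 - 1)
    (hfk : ∀ k, k ≠ 0 → k ≠ 1 → k ≠ 2 → f k = e k)
    (hA0 : f 0 ≠ 0) (hAspec : ∀ k, ea k = if k = 0 then f k - 1 else f k)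
    (hφ : exprF φa ≤ ea)
    (he2 : ∀ k, e2 k = if k = 1 ∨ k = 2 then e k - 1 else e k)
    (hψ : ∀ i, exprC (ps i) ≤ e2) :
    exprE (DFormula.branchConj α φa I ps) ≤ e := by
  have hF : ∀ k, exprF φa k ≤ ea k := fun k => hφ k
  have hS : ∀ k, (⨆ i, exprC (ps i)) k ≤ e2 k := fun k =>
    iSup_energy_apply_le k fun i => hψ i k
  have ha0 : 1 + exprF φa 0 ≤ e 0 ⊓ e 5 := by
    rw [← hf0]
    refine enat_one_add_le hA0 ?_
    have h := hF 0; rwa [hAspec 0, if_pos rfl] at h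
  intro k
  simp only [exprE, Pi.add_apply, Pi.sup_apply, unitE, onlyAt]
  rcases eq_or_ne k 0 with rfl | hk0
  · simp only [show ¬((0:Fin 8) = 1) from by decide, show ¬((0:Fin 8) = 2) from by decide,
      show ¬((0:Fin 8) = 5) from by decide, if_pos rfl, if_true, if_false, zero_add, add_zero,
      ite_false, ite_true]
    refine sup_le (sup_le ?_ zero_le) ?_
    · exact le_trans ha0 inf_le_left
    · refine le_trans (hS 0) (le_of_eq ?_)
      rw [he2 0]; simp
  rcases eq_or_ne k 1 with rfl | hk1
  · simp only [show ¬((1:Fin 8) = 0) from by decide, show ¬((1:Fin 8) = 2) from by decide,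
      show ¬((1:Fin 8) = 5) from by decide, if_pos rfl, if_true, if_false, zero_add, add_zero,
      ite_false, ite_true]
    refine enat_one_add_le h1 (sup_le (sup_le ?_ zero_le) ?_)
    · have h := hF 1
      rw [hAspec 1, if_neg (by decide), hf1] at h
      simpa using h
    · refine le_trans (hS 1) (le_of_eq ?_)
      rw [he2 1]; simp
  rcases eq_or_ne k 2 with rfl | hk2
  · simp only [show ¬((2:Fin 8) = 0) from by decide, show ¬((2:Fin 8) = 1) from by decide,
      show ¬((2:Fin 8) = 5) from by decide, if_pos rfl, if_true, if_false, zero_add, add_zero,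
      ite_false, ite_true]
    refine enat_one_add_le h2 (sup_le (sup_le ?_ zero_le) ?_)
    · have h := hF 2
      rw [hAspec 2, if_neg (by decide), hf2] at h
      simpa using h
    · refine le_trans (hS 2) (le_of_eq ?_)
      rw [he2 2]; simp
  have hfke : f k = e k := hfk k hk0 hk1 hk2
  have he2k : e2 k = e k := by
    rw [he2 k, if_neg]; push_neg; exact ⟨hk1, hk2⟩
  have heak : ea k = e k := by rw [hAspec k, if_neg hk0, hfke]
  have hFk : exprF φa k ≤ e k := heak ▸ hF k
  have hSk : (⨆ i, exprC (ps i)) k ≤ e k := he2k ▸ hS k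
  rcases eq_or_ne k 5 with rfl | hk5
  · simp only [show ¬((5:Fin 8) = 0) from by decide, show ¬((5:Fin 8) = 1) from by decide,
      show ¬((5:Fin 8) = 2) from by decide, if_pos rfl, if_true, if_false, zero_add, add_zero,
      ite_false, ite_true]
    refine sup_le (sup_le hFk ?_) hSk
    exact le_trans ha0 inf_le_right
  · simp only [if_neg hk0, if_neg hk1, if_neg hk2, if_neg hk5, zero_add, add_zero]
    exact sup_le (sup_le hFk zero_le) hSk

end PriceAux3
section Main

variable {Proc Act : Type}

/-- The combined induction statement over all game positions. -/
def Motive (Tr : Proc → Act → Proc → Prop) (τ : Act) : GPos Proc Act → Energy → Prop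
  | .att p Q, e => ∃ φ : Formula Act τ,
      StratF Tr τ (.att p Q) e φ ∧ exprF φ ≤ e
  | .attD p Q, e => ∃ χ : DFormula Act τ,
      StratD Tr τ (.attD p Q) e χ ∧ exprE χ ≤ e
  | .attC p q, e => ∃ ψ : Conjunct Act τ,
      StratC Tr τ (.attC p q) e ψ ∧ exprC ψ ≤ e
  | .attB p Q, e => ∃ (e' : Energy) (φ : Formula Act τ),
      upd e (decU 0) = some e' ∧ (specGame Tr τ).Win (.att p Q) e' ∧
      StratF Tr τ (.att p Q) e' φ ∧ exprF φ ≤ e'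
  | .defC p Q, e => ∃ ps : {q // q ∈ Q} → Conjunct Act τ,
      StratD Tr τ (.defC p Q) e (.conj _ ps) ∧ exprE (.conj {q // q ∈ Q} ps) ≤ e
  | .defS p Q, e => ∃ (I : Type) (ps : I → Conjunct Act τ),
      StratD Tr τ (.defS p Q) e (.stableConj I ps) ∧ exprE (.stableConj I ps) ≤ e
  | .defB p α p' Q Qa, e => ∃ χ : DFormula Act τ,
      StratD Tr τ (.defB p α p' Q Qa) e χ ∧ exprE χ ≤ e

lemma win_motive {Tr : Proc → Act → Proc → Prop} {τ : Act} {g : GPos Proc Act} {e : Energy}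
    (h : (specGame Tr τ).Win g e) : Motive Tr τ g e := by
  induction h with
  | @attack g u g' e e' hdef hmove hupd hwin ih =>
    cases hmove with
    | @delay p Q Q' hQ =>
      rw [upd_zeroU] at hupd
      obtain rfl : e = e' := Option.some.inj hupd
      obtain ⟨χ, hst, hle⟩ := ih
      exact ⟨.delayed χ, StratF.delay (GMove.delay hQ) (upd_zeroU e) hwin hst, hle⟩
    | @procrastination p p' Q htr hn =>
      rw [upd_zeroU] at hupd
      obtain rfl : e = e' := Option.some.inj hupd
      obtain ⟨χ, hst, hle⟩ := ih
      exact ⟨χ, StratD.procrastination (GMove.procrastination htr hn) (upd_zeroU e) hwin hst, hle⟩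
    | @observation p p' a Q Q' htr ha hset =>
      obtain ⟨φ, hst, hle⟩ := ih
      obtain ⟨h0, hspec⟩ := decU_spec hupd
      refine ⟨.obs a ha φ,
        StratD.observation ha (GMove.observation htr ha hset) htr hset hupd hwin hst, ?_⟩
      simp only [exprE]
      exact unit_add_le h0 hspec hle
    | @finishing p =>
      rw [upd_zeroU] at hupd
      obtain rfl : e = e' := Option.some.inj hupd
      obtain ⟨ps, hst, hle⟩ := ih
      refine ⟨.conj _ ps, StratF.immediateConj GMove.finishing (upd_zeroU e) hwin hst, ?_⟩
      exact conjF_price_empty (fun ⟨x⟩ => Set.notMem_empty x.1 x.2)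
    | @immediateConj p Q hn =>
      obtain ⟨ps, hst, hle⟩ := ih
      obtain ⟨h0, hspec⟩ := decU_spec hupd
      exact ⟨.conj _ ps, StratF.immediateConj (GMove.immediateConj hn) hupd hwin hst,
        conjF_price h0 hspec hle⟩
    | @lateConj p Q =>
      rw [upd_zeroU] at hupd
      obtain rfl : e = e' := Option.some.inj hupd
      obtain ⟨ps, hst, hle⟩ := ih
      exact ⟨.conj _ ps, StratD.lateConj GMove.lateConj (upd_zeroU e) hwin hst, hle⟩
    | conjAnswer _ => exact absurd trivial hdef
    | @posConjunct p q Q hQ =>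
      obtain ⟨χ, hst, hle⟩ := ih
      obtain ⟨h0, hk⟩ := minU16_spec hupd
      exact ⟨.pos χ, StratC.pos (GMove.posConjunct hQ) hupd hwin hst, pos_price h0 hk hle⟩
    | @negConjunct p q Q hQ hn =>
      obtain ⟨χ, hst, hle⟩ := ih
      obtain ⟨h7, h0, h7', hk⟩ := minU17dec8_spec hupd
      exact ⟨.neg χ, StratC.neg (GMove.negConjunct hQ hn) hupd hwin hst,
        neg_price h7 h0 h7' hk hle⟩
    | @stableConj p Q hstab =>
      rw [upd_zeroU] at hupd
      obtain rfl : e = e' := Option.some.inj hupd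
      obtain ⟨I, ps, hst, hle⟩ := ih
      exact ⟨.stableConj I ps, StratD.stable (GMove.stableConj hstab) (upd_zeroU e) hwin hst, hle⟩
    | conjStableAnswer _ => exact absurd trivial hdef
    | stableFinishing => exact absurd trivial hdef
    | @branchConj p p' α Q Qa hopt hsub =>
      rw [upd_zeroU] at hupd
      obtain rfl : e = e' := Option.some.inj hupd
      obtain ⟨χ, hst, hle⟩ := ih
      exact ⟨χ, StratD.branch (GMove.branchConj hopt hsub) (upd_zeroU e) hwin hst, hle⟩
    | branchAnswer _ => exact absurd trivial hdef
    | branchObservation _ => exact absurd trivial hdef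
    | @branchAccounting p Q =>
      obtain ⟨φ, hst, hle⟩ := ih
      exact ⟨e', φ, hupd, hwin, hst, hle⟩
  | @defend g e hdef hnn hwin ih =>
    cases g with
    | att p Q => exact absurd hdef (by simp [specGame, isDefender])
    | attD p Q => exact absurd hdef (by simp [specGame, isDefender])
    | attC p q => exact absurd hdef (by simp [specGame, isDefender])
    | attB p Q => exact absurd hdef (by simp [specGame, isDefender])
    | defC p Q =>
      by_cases hQ : Q = ∅
      · subst hQ
        refine ⟨fun qq => (Set.notMem_empty qq.1 qq.2).elim, ?_, ?_⟩
        · exact StratD.conj (fun qq => (Set.notMem_empty qq.1 qq.2).elim)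
            (fun qq => (Set.notMem_empty qq.1 qq.2).elim)
            (fun qq => (Set.notMem_empty qq.1 qq.2).elim)
            (fun qq => (Set.notMem_empty qq.1 qq.2).elim)
            (fun qq => (Set.notMem_empty qq.1 qq.2).elim)
            (fun qq => (Set.notMem_empty qq.1 qq.2).elim)
            (fun qq => (Set.notMem_empty qq.1 qq.2).elim)
        · exact conj_price_empty (fun ⟨x⟩ => Set.notMem_empty x.1 x.2)
      · obtain ⟨q0, hq0⟩ := Set.nonempty_iff_ne_empty.mpr hQ
        have hmv : GMove Tr τ (.defC p Q) (decU 2) (.attC p q0) := GMove.conjAnswer hq0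
        obtain ⟨e', he'⟩ := Option.ne_none_iff_exists'.mp (hnn _ _ hmv)
        have key : ∀ qq : {q // q ∈ Q}, ∃ ψ : Conjunct Act τ,
            StratC Tr τ (.attC p qq.1) e' ψ ∧ exprC ψ ≤ e' :=
          fun qq => ih _ _ _ (GMove.conjAnswer qq.2) he'
        choose ψs hst hle using key
        obtain ⟨h0, hspec⟩ := decU_spec he'
        refine ⟨ψs, ?_, conj_price h0 hspec hle⟩
        exact StratD.conj (fun _ => decU 2) (fun _ => e') ψs
          (fun qq => GMove.conjAnswer qq.2) (fun _ => he')
          (fun qq => hwin _ _ _ (GMove.conjAnswer qq.2) he') hst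
    | defS p Q =>
      by_cases hQ : Q = ∅
      · subst hQ
        have hmv : GMove Tr τ (.defS p ∅) (decU 3) (.defC p ∅) := GMove.stableFinishing
        obtain ⟨e', he'⟩ := Option.ne_none_iff_exists'.mp (hnn _ _ hmv)
        obtain ⟨h0, -⟩ := decU_spec he'
        exact ⟨Empty, fun x => x.elim,
          StratD.stableFinish hmv he' (hwin _ _ _ hmv he'), stableConj_empty_price h0⟩
      · obtain ⟨q0, hq0⟩ := Set.nonempty_iff_ne_empty.mpr hQ
        have hmv : GMove Tr τ (.defS p Q) (decU 3) (.attC p q0) := GMove.conjStableAnswer hq0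
        obtain ⟨e', he'⟩ := Option.ne_none_iff_exists'.mp (hnn _ _ hmv)
        have key : ∀ qq : {q // q ∈ Q}, ∃ ψ : Conjunct Act τ,
            StratC Tr τ (.attC p qq.1) e' ψ ∧ exprC ψ ≤ e' :=
          fun qq => ih _ _ _ (GMove.conjStableAnswer qq.2) he'
        choose ψs hst hle using key
        obtain ⟨h0, hspec⟩ := decU_spec he'
        refine ⟨{q // q ∈ Q}, ψs, ?_, stableConj_price h0 hspec hle⟩
        exact StratD.stableConj (Set.nonempty_iff_ne_empty.mpr hQ) (fun _ => decU 3)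
          (fun _ => e') ψs (fun qq => GMove.conjStableAnswer qq.2) (fun _ => he')
          (fun qq => hwin _ _ _ (GMove.conjStableAnswer qq.2) he') hst
    | defB p α p' Q Qa =>
      have hobs : GMove Tr τ (.defB p α p' Q Qa) minU16dec23
          (.attB p' {q' | ∃ q ∈ Qa, OptStep Tr τ q α q'}) :=
        GMove.branchObservation rfl
      obtain ⟨e1, he1⟩ := Option.ne_none_iff_exists'.mp (hnn _ _ hobs)
      obtain ⟨ea, φa, hupdA, hwinA, hstA, hleA⟩ := ih _ _ _ hobs he1
      obtain ⟨h1', h2', hf0, hf1, hf2, hfk⟩ := minU16dec23_spec he1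
      obtain ⟨hA0, hAspec⟩ := decU_spec hupdA
      have he2def := upd_dec23_of e h1' h2'
      have key : ∀ qq : {q // q ∈ Q}, ∃ ψ : Conjunct Act τ,
          StratC Tr τ (.attC p qq.1) (fun k => if k = 1 ∨ k = 2 then e k - 1 else e k) ψ ∧
          exprC ψ ≤ (fun k => if k = 1 ∨ k = 2 then e k - 1 else e k) :=
        fun qq => ih _ _ _ (GMove.branchAnswer qq.2) he2def
      choose ψs hst hle using key
      refine ⟨.branchConj α φa {q // q ∈ Q} ψs, ?_, ?_⟩
      · exact StratD.branchConj (fun _ => dec23)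
          (fun _ => fun k => if k = 1 ∨ k = 2 then e k - 1 else e k) ψs hobs
          GMove.branchAccounting he1 hupdA hwinA hstA
          (fun qq => GMove.branchAnswer qq.2) (fun _ => he2def)
          (fun qq => hwin _ _ _ (GMove.branchAnswer qq.2) he2def) hst
      · exact branch_price h1' h2' hf0 hf1 hf2 hfk hA0 hAspec hleA (fun k => rfl) hle

end Main

/-- winning budgets at `[p,q]^∧_a` yield strategy conjuncts of
price at most `e`. -/
theorem win_implies_strategy_formula_conjunct {Proc Act : Type}
    (Tr : Proc → Act → Proc → Prop) (τ : Act) (p q : Proc) (e : Energy)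
    (h : (specGame Tr τ).Win (.attC p q) e) :
    ∃ ψ : Conjunct Act τ, StratC Tr τ (.attC p q) e ψ ∧ exprC ψ ≤ e := by
  exact win_motive h

end Spectroscopy
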